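/- arXiv:1701.07482 — 4 statements merged into one kernel-verified Lean document; each statement's English description precedes it below -/
import Mathlib

section
/- Consider the switched quantized control system with parameter α satisfying 1 < α < 3/2 and disturbance rounding error Δ_d with |Δ_d| ≤ 1/2. If at some time k the state satisfies condition (9), i.e., −1/2 < e(k) < 1/2, 1 ≤ α − ū(k)·sign(Δ_d) < 3/2, and −1/2 < ū(k) < 1/2, then for every integer h > 0 the quantized state satisfies (ρ(e(k+h)), ρ(ū(k+h))) ∈ {(0, 0), (sign(Δ_d), −sign(Δ_d))}. -/
/-- Sign function: 1 for positive, 0 for zero, -1 for negative. -/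
noncomputable def rsign (z : ℝ) : ℤ :=
  if 0 < z then 1 else if z = 0 then 0 else -1

/-- Rounding operator: rounds to the nearest integer, ties away from zero. -/
noncomputable def rho (z : ℝ) : ℤ :=
  if Int.fract |z| < 1/2 then rsign z * ⌊|z|⌋ else rsign z * (⌊|z|⌋ + 1)

/-- The switched quantized control system with parameter `α` and disturbance
rounding error `Δd`, with state trajectory `(e, u)`. -/
def Traj (α Δd : ℝ) (e u : ℕ → ℝ) : Prop :=
  ∀ k : ℕ,
    e (k+1) = e k + (rho (u k) : ℝ) + Δd ∧
    u (k+1) = if rho (e (k+1)) = 0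
      then ((rho (u k) : ℝ) + (rho (e k) : ℝ))
      else (u k + (rho (e k) : ℝ) - α * (rho (e (k+1)) : ℝ))

/-- Condition (9) at time `k`. -/
def Cond9 (α Δd : ℝ) (e u : ℕ → ℝ) (k : ℕ) : Prop :=
  (-(1/2) < e k ∧ e k < 1/2) ∧
  (1 ≤ α - u k * (rsign Δd : ℝ) ∧ α - u k * (rsign Δd : ℝ) < 3/2) ∧
  (-(1/2) < u k ∧ u k < 1/2)

lemma rho_eq_zero (z : ℝ) (h : |z| < 1/2) : rho z = 0 := by
  unfold rho rsign
  have h0 : ⌊|z|⌋ = 0 := Int.floor_eq_zero_iff.2 ⟨abs_nonneg z, by linarith⟩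
  have hf : Int.fract |z| = |z| := by rw [Int.fract, h0]; simp
  rw [hf, if_pos h, h0, mul_zero]

lemma rho_one (z : ℝ) (h1 : 1/2 ≤ z) (h2 : z < 3/2) : rho z = 1 := by
  have hz : 0 < z := by linarith
  have habs : |z| = z := abs_of_pos hz
  unfold rho rsign
  rw [if_pos hz, habs]
  rcases lt_or_ge z 1 with h | h
  · have h0 : ⌊z⌋ = 0 := Int.floor_eq_zero_iff.2 ⟨by linarith, h⟩
    have hf : Int.fract z = z := by rw [Int.fract, h0]; simp
    rw [hf, if_neg (by linarith), h0]; ring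
  · have h0 : ⌊z⌋ = 1 := by
      rw [Int.floor_eq_iff]
      constructor <;> push_cast <;> linarith
    have hf : Int.fract z = z - 1 := by rw [Int.fract, h0]; push_cast; ring
    rw [hf, if_pos (by linarith), h0]; ring

lemma rho_neg (z : ℝ) : rho (-z) = - rho z := by
  have hs : rsign (-z) = - rsign z := by
    unfold rsign
    rcases lt_trichotomy z 0 with h | h | h
    · rw [if_pos (by linarith), if_neg (not_lt.2 h.le), if_neg h.ne]; ring
    · subst h; norm_num
    · rw [if_neg (by linarith), if_neg (fun hc => by linarith), if_pos h]
  unfold rho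
  rw [abs_neg, hs]
  split <;> ring

lemma rho_neg_one (z : ℝ) (h1 : -(3/2) < z) (h2 : z ≤ -(1/2)) : rho z = -1 := by
  have h : rho (-(-z)) = - rho (-z) := rho_neg (-z)
  rw [neg_neg] at h
  rw [h, rho_one (-z) (by linarith) (by linarith)]

lemma rsign_pos {z : ℝ} (h : 0 < z) : rsign z = 1 := by unfold rsign; rw [if_pos h]

lemma rsign_neg {z : ℝ} (h : z < 0) : rsign z = -1 := by
  unfold rsign; rw [if_neg (not_lt.2 h.le), if_neg h.ne]

/-- Auxiliary invariant: the "quantized ±1" state. -/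
def BState (Δd : ℝ) (e u : ℕ → ℝ) (n : ℕ) : Prop :=
  (0 < Δd ∧ 1/2 ≤ e n ∧ e n < 1 ∧ -(3/2) < u n ∧ u n ≤ -1) ∨
  (Δd < 0 ∧ -1 < e n ∧ e n ≤ -(1/2) ∧ 1 ≤ u n ∧ u n < 3/2)

lemma inv_step (α Δd : ℝ) (hα1 : 1 < α) (hα2 : α < 3/2) (hΔ : |Δd| ≤ 1/2)
    (e u : ℕ → ℝ) (htraj : Traj α Δd e u) (n : ℕ)
    (h : Cond9 α Δd e u n ∨ BState Δd e u n) :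
    Cond9 α Δd e u (n+1) ∨ BState Δd e u (n+1) := by
  obtain ⟨he, hu⟩ := htraj n
  obtain ⟨hd1, hd2⟩ := abs_le.1 hΔ
  rcases h with ⟨⟨he1, he2⟩, ⟨ha1, ha2⟩, hu1, hu2⟩ | hb
  · have hre : rho (e n) = 0 := rho_eq_zero _ (abs_lt.2 ⟨by linarith, he2⟩)
    have hru : rho (u n) = 0 := rho_eq_zero _ (abs_lt.2 ⟨by linarith, hu2⟩)
    have he' : e (n+1) = e n + Δd := by rw [he, hru]; norm_num
    rcases le_or_gt (1/2) (e (n+1)) with hge | hlt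
    · -- jump up: Δd > 0
      have hdpos : 0 < Δd := by nlinarith [he']
      have hs : (rsign Δd : ℝ) = 1 := by rw [rsign_pos hdpos]; norm_num
      rw [hs, mul_one] at ha1 ha2
      have hre1 : rho (e (n+1)) = 1 := rho_one _ hge (by rw [he']; linarith)
      rw [if_neg (by rw [hre1]; norm_num), hre, hre1] at hu
      have hu' : u (n+1) = u n - α := by rw [hu]; push_cast; ring
      right; left
      exact ⟨hdpos, hge, by rw [he']; linarith, by rw [hu']; linarith,
        by rw [hu']; linarith⟩
    · rcases lt_or_ge (-(1/2)) (e (n+1)) with hgt | hle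
      · -- stay small
        have hre1 : rho (e (n+1)) = 0 := rho_eq_zero _ (abs_lt.2 ⟨hgt, hlt⟩)
        rw [if_pos hre1, hre, hru] at hu
        have hu' : u (n+1) = 0 := by rw [hu]; norm_num
        left
        refine ⟨⟨hgt, hlt⟩, ⟨?_, ?_⟩, ?_, ?_⟩ <;> rw [hu'] <;>
          simp <;> linarith
      · -- jump down: Δd < 0
        have hdneg : Δd < 0 := by nlinarith [he']
        have hs : (rsign Δd : ℝ) = -1 := by rw [rsign_neg hdneg]; norm_num
        rw [hs] at ha1 ha2
        have hre1 : rho (e (n+1)) = -1 :=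
          rho_neg_one _ (by rw [he']; linarith) hle
        rw [if_neg (by rw [hre1]; norm_num), hre, hre1] at hu
        have hu' : u (n+1) = u n + α := by rw [hu]; push_cast; ring
        right; right
        exact ⟨hdneg, by rw [he']; linarith, hle, by rw [hu']; nlinarith,
          by rw [hu']; nlinarith⟩
  · rcases hb with ⟨hd, he1, he2, hu1, hu2⟩ | ⟨hd, he1, he2, hu1, hu2⟩
    · have hre : rho (e n) = 1 := rho_one _ he1 (by linarith)
      have hru : rho (u n) = -1 := rho_neg_one _ hu1 (by linarith)
      have he' : e (n+1) = e n - 1 + Δd := by rw [he, hru]; push_cast; ring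
      have hgt : -(1/2) < e (n+1) := by rw [he']; linarith
      have hlt : e (n+1) < 1/2 := by rw [he']; linarith
      have hre1 : rho (e (n+1)) = 0 := rho_eq_zero _ (abs_lt.2 ⟨hgt, hlt⟩)
      rw [if_pos hre1, hre, hru] at hu
      have hu' : u (n+1) = 0 := by rw [hu]; norm_num
      left
      refine ⟨⟨hgt, hlt⟩, ⟨?_, ?_⟩, ?_, ?_⟩ <;> rw [hu'] <;>
        simp <;> linarith
    · have hre : rho (e n) = -1 := rho_neg_one _ (by linarith) he2
      have hru : rho (u n) = 1 := rho_one _ (by linarith) hu2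
      have he' : e (n+1) = e n + 1 + Δd := by rw [he, hru]; push_cast; ring
      have hgt : -(1/2) < e (n+1) := by rw [he']; linarith
      have hlt : e (n+1) < 1/2 := by rw [he']; linarith
      have hre1 : rho (e (n+1)) = 0 := rho_eq_zero _ (abs_lt.2 ⟨hgt, hlt⟩)
      rw [if_pos hre1, hre, hru] at hu
      have hu' : u (n+1) = 0 := by rw [hu]; norm_num
      left
      refine ⟨⟨hgt, hlt⟩, ⟨?_, ?_⟩, ?_, ?_⟩ <;> rw [hu'] <;>
        simp <;> linarith

theorem stmt_0 (α Δd : ℝ) (hα : 1 < α ∧ α < 3/2) (hΔ : |Δd| ≤ 1/2)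
    (e u : ℕ → ℝ) (htraj : Traj α Δd e u) (k : ℕ) (h9 : Cond9 α Δd e u k) :
    ∀ h : ℕ, 0 < h →
      (rho (e (k+h)), rho (u (k+h))) = ((0 : ℤ), (0 : ℤ)) ∨
      (rho (e (k+h)), rho (u (k+h))) = (rsign Δd, -rsign Δd) := by
  have inv : ∀ h : ℕ, Cond9 α Δd e u (k+h) ∨ BState Δd e u (k+h) := by
    intro h
    induction h with
    | zero => exact Or.inl h9
    | succ n ih => exact inv_step α Δd hα.1 hα.2 hΔ e u htraj (k+n) ih
  intro h _
  rcases inv h with ⟨⟨he1, he2⟩, _, hu1, hu2⟩ | hb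
  · left
    rw [rho_eq_zero _ (abs_lt.2 ⟨by linarith, he2⟩),
      rho_eq_zero _ (abs_lt.2 ⟨by linarith, hu2⟩)]
  · rcases hb with ⟨hd, he1, he2, hu1, hu2⟩ | ⟨hd, he1, he2, hu1, hu2⟩
    · right
      rw [rho_one _ he1 (by linarith), rho_neg_one _ hu1 (by linarith),
        rsign_pos hd]
    · right
      rw [rho_neg_one _ (by linarith) he2, rho_one _ (by linarith) hu2, rsign_neg hd]; norm_num
end

section
/- (No periodic solution for irrational disturbance rounding error.) Consider the switched quantized control system with parameter α satisfying 1 < α < 3/2 and disturbance rounding error Δ_d irrational with |Δ_d| < 1/2, and suppose condition (9) holds at some time k. Then the trajectory is never eventually periodic: there exist no integers p ≥ 1 and k̄ ≥ k such that e(j+p) = e(j) and ū(j+p) = ū(j) for all j ≥ k̄. -/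
theorem stmt_5 (α Δd : ℝ) (hα : 1 < α ∧ α < 3/2)
    (hirr : Irrational Δd) (hΔ : |Δd| < 1/2)
    (e u : ℕ → ℝ) (htraj : Traj α Δd e u) (k : ℕ) (h9 : Cond9 α Δd e u k) :
    ¬ ∃ (p : ℕ) (kb : ℕ), 1 ≤ p ∧ k ≤ kb ∧
        ∀ j : ℕ, kb ≤ j → e (j+p) = e j ∧ u (j+p) = u j := by
  rintro ⟨p, kb, hp, hkb, hper⟩
  have key : ∀ n : ℕ, e (kb + n) =
      e kb + ((∑ i ∈ Finset.range n, rho (u (kb + i)) : ℤ) : ℝ) + n * Δd := by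
    intro n
    induction n with
    | zero => simp
    | succ n ih =>
      have h := (htraj (kb + n)).1
      rw [show kb + (n+1) = kb + n + 1 from rfl, h, ih]
      push_cast [Finset.sum_range_succ]
      ring
  have hpe : e (kb + p) = e kb := (hper kb le_rfl).1
  set S : ℤ := ∑ i ∈ Finset.range p, rho (u (kb + i)) with hS
  have hd : Δd = ((-S : ℚ) / p : ℚ) := by
    have h := key p
    rw [hpe] at h
    have hp0 : (p : ℝ) ≠ 0 := by positivity
    field_simp
    push_cast
    rw [← hS] at h
    rw [neg_div', eq_div_iff hp0]
    linarith
  exact hirr ⟨(-S : ℚ) / p, hd.symm⟩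
end

section
/- (One-step lemma, no switch.) Consider the switched quantized control system with parameter α satisfying 1 < α < 3/2 and disturbance rounding error Δ_d with 0 < Δ_d ≤ 1/2. Suppose at time k condition (9) holds and additionally |e(k) + Δ_d| < 1/2. Then e(k+1) = e(k) + Δ_d, ū(k+1) = 0, (ρ(e(k+1)), ρ(ū(k+1))) = (0, 0), and condition (9) holds at time k+1. -/
lemma rho_eq_zero_of_abs_lt {z : ℝ} (h : |z| < 1/2) : rho z = 0 := by
  have h0 : (0:ℝ) ≤ |z| := abs_nonneg z
  have hfl : ⌊|z|⌋ = 0 := by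
    rw [Int.floor_eq_zero_iff]; exact ⟨h0, by linarith⟩
  have hf : Int.fract |z| < 1/2 := by
    rw [Int.fract, hfl]; simpa using h
  rw [rho, if_pos hf, hfl, mul_zero]

theorem stmt_11 (α Δd : ℝ) (hα : 1 < α ∧ α < 3/2) (hΔ : 0 < Δd ∧ Δd ≤ 1/2)
    (e u : ℕ → ℝ) (htraj : Traj α Δd e u) (k : ℕ) (h9 : Cond9 α Δd e u k)
    (hstep : |e k + Δd| < 1/2) :
    e (k+1) = e k + Δd ∧ u (k+1) = 0 ∧
    (rho (e (k+1)), rho (u (k+1))) = ((0 : ℤ), (0 : ℤ)) ∧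
    Cond9 α Δd e u (k+1) := by
  obtain ⟨he, hαu, hu⟩ := h9
  have hru : rho (u k) = 0 := rho_eq_zero_of_abs_lt (abs_lt.mpr ⟨hu.1, hu.2⟩)
  have hre : rho (e k) = 0 := rho_eq_zero_of_abs_lt (abs_lt.mpr ⟨he.1, he.2⟩)
  obtain ⟨he1, hu1⟩ := htraj k
  have heq : e (k+1) = e k + Δd := by rw [he1, hru]; push_cast; ring
  have hre1 : rho (e (k+1)) = 0 := by
    rw [heq]; exact rho_eq_zero_of_abs_lt hstep
  have hueq : u (k+1) = 0 := by rw [hu1, if_pos hre1, hru, hre]; norm_num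
  have hru1 : rho (u (k+1)) = 0 := by
    rw [hueq]; exact rho_eq_zero_of_abs_lt (by norm_num)
  refine ⟨heq, hueq, by simp [hre1, hru1], ?_⟩
  have hab := abs_lt.mp hstep
  refine ⟨⟨by rw [heq]; linarith [hab.1], by rw [heq]; linarith [hab.2]⟩, ?_, ?_⟩
  · rw [hueq]; constructor <;> simp <;> linarith [hα.1, hα.2]
  · rw [hueq]; norm_num
end

section
/- (Two-step lemma, with switch.) Consider the switched quantized control system with parameter α satisfying 1 < α < 3/2 and disturbance rounding error Δ_d with 0 < Δ_d ≤ 1/2. Suppose at time k condition (9) holds and additionally 1/2 ≤ e(k) + Δ_d < 1. Then: (i) e(k+1) = e(k) + Δ_d, ū(k+1) = ū(k) − α, and (ρ(e(k+1)), ρ(ū(k+1))) = (1, −1); (ii) e(k+2) = e(k) + 2Δ_d − 1 with −1/2 < e(k+2) < 1/2, ū(k+2) = 0, (ρ(e(k+2)), ρ(ū(k+2))) = (0, 0), and condition (9) holds at time k+2. -/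
lemma rho_zero_of {z : ℝ} (h1 : -(1/2) < z) (h2 : z < 1/2) : rho z = 0 := by
  have habs : |z| < 1/2 := abs_lt.mpr ⟨by linarith, h2⟩
  have hfl : ⌊|z|⌋ = 0 := by
    rw [Int.floor_eq_zero_iff]
    constructor
    · exact abs_nonneg z
    · linarith
  have hfr : Int.fract |z| < 1/2 := by
    rw [Int.fract, hfl]; push_cast; linarith
  rw [rho, if_pos hfr, hfl, mul_zero]

lemma rho_one_of {z : ℝ} (h1 : 1/2 ≤ z) (h2 : z < 1) : rho z = 1 := by
  have hz : 0 < z := by linarith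
  have habs : |z| = z := abs_of_pos hz
  have hfl : ⌊|z|⌋ = 0 := by
    rw [habs, Int.floor_eq_zero_iff]; exact ⟨by linarith, by linarith⟩
  have hfr : ¬ Int.fract |z| < 1/2 := by
    rw [Int.fract, hfl]; push_cast; rw [habs]; linarith
  rw [rho, if_neg hfr, hfl, rsign_pos hz]; ring

lemma rho_negone_of {z : ℝ} (h1 : -(3/2) < z) (h2 : z ≤ -1) : rho z = -1 := by
  have hz : z < 0 := by linarith
  have habs : |z| = -z := abs_of_neg hz
  have hfl : ⌊|z|⌋ = 1 := by
    rw [habs]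
    have : ⌊-z⌋ = (1:ℤ) ↔ _ := Int.floor_eq_iff (R := ℝ)
    rw [this]; push_cast; exact ⟨by linarith, by linarith⟩
  have hfr : Int.fract |z| < 1/2 := by
    rw [Int.fract, hfl]; push_cast; rw [habs]; linarith
  have hs : rsign z = -1 := by simp [rsign, hz, not_lt.mpr hz.le, ne_of_lt hz]
  rw [rho, if_pos hfr, hfl, hs]; ring

theorem stmt_12 (α Δd : ℝ) (hα : 1 < α ∧ α < 3/2) (hΔ : 0 < Δd ∧ Δd ≤ 1/2)
    (e u : ℕ → ℝ) (htraj : Traj α Δd e u) (k : ℕ) (h9 : Cond9 α Δd e u k)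
    (hstep : 1/2 ≤ e k + Δd ∧ e k + Δd < 1) :
    (e (k+1) = e k + Δd ∧ u (k+1) = u k - α ∧
      (rho (e (k+1)), rho (u (k+1))) = ((1 : ℤ), (-1 : ℤ))) ∧
    (e (k+2) = e k + 2*Δd - 1 ∧ (-(1/2) < e (k+2) ∧ e (k+2) < 1/2) ∧
      u (k+2) = 0 ∧
      (rho (e (k+2)), rho (u (k+2))) = ((0 : ℤ), (0 : ℤ)) ∧
      Cond9 α Δd e u (k+2)) := by
  obtain ⟨hα1, hα2⟩ := hα
  obtain ⟨hΔ1, hΔ2⟩ := hΔ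
  obtain ⟨⟨he1, he2⟩, ⟨hu1, hu2⟩, ⟨hu3, hu4⟩⟩ := h9
  obtain ⟨hs1, hs2⟩ := hstep
  have hrs : rsign Δd = 1 := rsign_pos hΔ1
  rw [hrs] at hu1 hu2
  push_cast at hu1 hu2
  have hrek : rho (e k) = 0 := rho_zero_of he1 he2
  have hruk : rho (u k) = 0 := rho_zero_of hu3 hu4
  obtain ⟨hek1, huk1⟩ := htraj k
  rw [hruk] at hek1; push_cast at hek1
  have hek1' : e (k+1) = e k + Δd := by linarith
  have hre1 : rho (e (k+1)) = 1 := by rw [hek1']; exact rho_one_of hs1 hs2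
  rw [hre1] at huk1; simp at huk1
  rw [hrek] at huk1; push_cast at huk1
  have huk1' : u (k+1) = u k - α := by linarith
  have hru1 : rho (u (k+1)) = -1 := by
    rw [huk1']; exact rho_negone_of (by linarith) (by linarith)
  obtain ⟨hek2, huk2⟩ := htraj (k+1)
  rw [hru1] at hek2; push_cast at hek2
  have hek2' : e (k+2) = e k + 2*Δd - 1 := by
    have : (k+1)+1 = k+2 := rfl
    rw [this] at hek2; rw [hek2, hek1']; ring
  have hb1 : -(1/2) < e (k+2) := by rw [hek2']; linarith
  have hb2 : e (k+2) < 1/2 := by rw [hek2']; linarith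
  have hre2 : rho (e (k+2)) = 0 := rho_zero_of hb1 hb2
  have : (k+1)+1 = k+2 := rfl
  rw [this] at huk2
  rw [hre2] at huk2; simp at huk2
  rw [hru1, hre1] at huk2; push_cast at huk2
  have huk2' : u (k+2) = 0 := by linarith
  have hru2 : rho (u (k+2)) = 0 := rho_zero_of (by rw [huk2']; norm_num) (by rw [huk2']; norm_num)
  refine ⟨⟨hek1', huk1', by rw [hre1, hru1]⟩, hek2', ⟨hb1, hb2⟩, huk2', by rw [hre2, hru2], ?_⟩
  refine ⟨⟨hb1, hb2⟩, ?_, ?_⟩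
  · rw [hrs, huk2']; push_cast; constructor <;> linarith
  · rw [huk2']; norm_num
end
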